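/- Let φ* : ℝ^n → ℝ be strictly convex and differentiable, let U be a k × n real matrix, and let A = y^P + Im(Uᵀ) be an affine subspace of ℝ^n. Fix x₀ ∈ ℝ_{>0}^n. If the function y ↦ φ*(y) - ⟨y, x₀⟩ restricted to A attains a minimum, the minimizer y^B is unique and satisfies U ∂φ*(y^B) = U x₀ together with y^B ∈ A. (Birch's theorem: the intersection of the isochoric stoichiometric manifold {y : U ∂φ*(y) = U x₀} with A is exactly {y^B}.) -/

import Mathlib

section aux

variable {n : ℕ}

/-- Strict convexity is preserved by composition with an injective affine line. -/
private lemma strictConvexOn_comp_line {f : (Fin n → ℝ) → ℝ}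
    (hf : StrictConvexOn ℝ Set.univ f) (y w : Fin n → ℝ) (hw : w ≠ 0) :
    StrictConvexOn ℝ Set.univ (fun t : ℝ => f (y + t • w)) := by
  refine ⟨convex_univ, fun s _ t _ hst a b ha hb hab => ?_⟩
  have hkey : y + (a • s + b • t) • w = a • (y + s • w) + b • (y + t • w) := by
    funext i
    simp only [smul_eq_mul, Pi.add_apply, Pi.smul_apply]
    have h1 : a + b = 1 := hab
    linear_combination (-(y i)) * h1
  have hne : y + s • w ≠ y + t • w := by
    intro h
    have h2 : (s - t) • w = 0 := by
      have := add_left_cancel h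
      rw [sub_smul, this, sub_self]
    rcases smul_eq_zero.mp h2 with h3 | h3
    · exact hst (by linarith [sub_eq_zero.mp h3])
    · exact hw h3
  calc (fun t : ℝ => f (y + t • w)) (a • s + b • t)
      = f (a • (y + s • w) + b • (y + t • w)) := by rw [← hkey]
    _ < a • f (y + s • w) + b • f (y + t • w) :=
        hf.2 (Set.mem_univ _) (Set.mem_univ _) hne ha hb hab

end aux

/-- Birch's theorem, uniqueness/characterization: if the
strictly convex function y ↦ φ*(y) - ⟨y,x₀⟩ restricted to the affine subspace
A = y^P + Im(Uᵀ) attains a minimum at y^B, then y^B satisfies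
U ∂φ*(y^B) = U x₀, and the intersection of the isochoric stoichiometric
manifold {y : U ∂φ*(y) = U x₀} with A is exactly {y^B}. -/
theorem birch_theorem (n k : ℕ) (φstar : (Fin n → ℝ) → ℝ)
    (hconv : StrictConvexOn ℝ Set.univ φstar)
    (hdiff : Differentiable ℝ φstar)
    (g : (Fin n → ℝ) → (Fin n → ℝ))
    (hgrad : ∀ y v, fderiv ℝ φstar y v = ∑ i, g y i * v i)
    (U : Matrix (Fin k) (Fin n) ℝ) (yP : Fin n → ℝ)
    (x₀ : Fin n → ℝ) (hx₀ : ∀ i, 0 < x₀ i)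
    (yB : Fin n → ℝ)
    (hmemB : ∃ c : Fin k → ℝ, yB = yP + Matrix.vecMul c U)
    (hmin : IsMinOn (fun y => φstar y - ∑ i, y i * x₀ i)
      {y : Fin n → ℝ | ∃ c : Fin k → ℝ, y = yP + Matrix.vecMul c U} yB) :
    U.mulVec (g yB) = U.mulVec x₀ ∧
    ({y : Fin n → ℝ | U.mulVec (g y) = U.mulVec x₀} ∩
      {y : Fin n → ℝ | ∃ c : Fin k → ℝ, y = yP + Matrix.vecMul c U}) = {yB} := by
  classical
  set f : (Fin n → ℝ) → ℝ := fun y => φstar y - ∑ i, y i * x₀ i with hfdef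
  set A : Set (Fin n → ℝ) := {y : Fin n → ℝ | ∃ c : Fin k → ℝ, y = yP + Matrix.vecMul c U}
    with hAdef
  -- linear part
  set L : (Fin n → ℝ) →L[ℝ] ℝ :=
    ∑ i, x₀ i • ContinuousLinearMap.proj (R := ℝ) (φ := fun _ : Fin n => ℝ) i with hL
  have hLapp : ∀ v : Fin n → ℝ, L v = ∑ i, x₀ i * v i := by
    intro v
    simp [hL, ContinuousLinearMap.sum_apply]
  have hLd : ∀ y : Fin n → ℝ, HasFDerivAt (fun v : Fin n → ℝ => ∑ i, v i * x₀ i) L y := by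
    intro y
    exact HasFDerivAt.fun_sum fun i _ =>
      ((ContinuousLinearMap.proj (R := ℝ) (φ := fun _ : Fin n => ℝ) i).hasFDerivAt.mul_const
        (x₀ i))
  have hfd : ∀ y : Fin n → ℝ, HasFDerivAt f (fderiv ℝ φstar y - L) y := fun y =>
    ((hdiff y).hasFDerivAt).sub (hLd y)
  have hDval : ∀ y v : Fin n → ℝ,
      (fderiv ℝ φstar y - L) v = ∑ i, (g y i - x₀ i) * v i := by
    intro y v
    rw [ContinuousLinearMap.sub_apply, hgrad, hLapp, ← Finset.sum_sub_distrib]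
    congr 1; funext i; ring
  -- derivative of f along a line
  have hline : ∀ (y w : Fin n → ℝ),
      HasDerivAt (fun t : ℝ => f (y + t • w)) (∑ i, (g y i - x₀ i) * w i) 0 := by
    intro y w
    have hγ : HasDerivAt (fun t : ℝ => y + t • w) w 0 := by
      simpa using ((hasDerivAt_id (0 : ℝ)).smul_const w).const_add y
    have h := (hfd (y + (0 : ℝ) • w)).comp_hasDerivAt 0 hγ
    simp only [zero_smul, add_zero] at h
    have hv := hDval y w
    rw [← hv]
    exact h
  -- f is strictly convex on univ
  have hfconv : StrictConvexOn ℝ Set.univ f := by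
    have hlin : ConvexOn ℝ Set.univ (fun y : Fin n → ℝ => -∑ i, y i * x₀ i) := by
      refine ⟨convex_univ, fun x _ y _ a b ha hb hab => le_of_eq ?_⟩
      simp only [smul_eq_mul, Pi.add_apply, Pi.smul_apply]
      rw [mul_neg, mul_neg, ← neg_add, neg_inj, Finset.mul_sum, Finset.mul_sum,
        ← Finset.sum_add_distrib]
      exact Finset.sum_congr rfl fun i _ => by ring
    have h2 := hconv.add_convexOn hlin
    have heq : (φstar + fun y : Fin n → ℝ => -∑ i, y i * x₀ i) = f := by
      funext z; simp [hfdef, sub_eq_add_neg]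
    rw [← heq]
    exact h2
  -- the affine set is stable along row-span directions
  obtain ⟨cB, hcB⟩ := hmemB
  -- Part 1: stationarity at yB
  have hstat : ∀ d : Fin k → ℝ, ∑ i, (g yB i - x₀ i) * Matrix.vecMul d U i = 0 := by
    intro d
    set w : Fin n → ℝ := Matrix.vecMul d U with hw
    have hlm : IsLocalMin (fun t : ℝ => f (yB + t • w)) 0 := by
      apply Filter.Eventually.of_forall
      intro t
      have hmem : yB + t • w ∈ A := by
        refine ⟨cB + t • d, ?_⟩
        rw [hcB, Matrix.add_vecMul, Matrix.smul_vecMul]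
        abel
      have := hmin hmem
      simpa using this
    exact hlm.hasDerivAt_eq_zero (hline yB w)
  have part1 : U.mulVec (g yB) = U.mulVec x₀ := by
    funext j
    have h := hstat (Pi.single j 1)
    rw [Matrix.single_one_vecMul] at h
    change ∑ i, (g yB i - x₀ i) * U j i = 0 at h
    simp only [Matrix.mulVec, dotProduct]
    have : ∑ i, (g yB i - x₀ i) * U j i
        = ∑ i, U j i * g yB i - ∑ i, U j i * x₀ i := by
      rw [← Finset.sum_sub_distrib]; congr 1; funext i; ring
    rw [this] at h
    linarith
  refine ⟨part1, ?_⟩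
  -- Part 2: the intersection is exactly {yB}
  ext y
  simp only [Set.mem_inter_iff, Set.mem_setOf_eq, Set.mem_singleton_iff]
  constructor
  · rintro ⟨hy1, c', hc'⟩
    by_contra hne
    set w : Fin n → ℝ := yB - y with hw
    have hwspan : w = Matrix.vecMul (cB - c') U := by
      rw [hw, hcB, hc', Matrix.sub_vecMul]
      abel
    have hwne : w ≠ 0 := by
      intro h
      have h2 : yB - y = 0 := hw ▸ h
      exact hne (sub_eq_zero.mp h2).symm
    -- stationarity at y along w
    have hstat' : ∑ i, (g y i - x₀ i) * w i = 0 := by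
      rw [hwspan]
      have : ∀ i, Matrix.vecMul (cB - c') U i = ∑ j, (cB - c') j * U j i := by
        intro i; simp [Matrix.vecMul, dotProduct]
      calc ∑ i, (g y i - x₀ i) * Matrix.vecMul (cB - c') U i
          = ∑ i, ∑ j, (cB - c') j * (U j i * (g y i - x₀ i)) := by
            refine Finset.sum_congr rfl fun i _ => ?_
            rw [this i, Finset.mul_sum]
            refine Finset.sum_congr rfl fun j _ => by ring
        _ = ∑ j, (cB - c') j * ∑ i, U j i * (g y i - x₀ i) := by
            rw [Finset.sum_comm]
            refine Finset.sum_congr rfl fun j _ => by rw [Finset.mul_sum]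
        _ = 0 := by
            refine Finset.sum_eq_zero fun j _ => ?_
            have : ∑ i, U j i * (g y i - x₀ i)
                = U.mulVec (g y) j - U.mulVec x₀ j := by
              simp only [Matrix.mulVec, dotProduct]
              rw [← Finset.sum_sub_distrib]
              refine Finset.sum_congr rfl fun i _ => by ring
            rw [this, hy1, sub_self, mul_zero]
    -- strict convexity along the line from y to yB
    have hstrict := strictConvexOn_comp_line hfconv y w hwne
    have hd : HasDerivAt (fun t : ℝ => f (y + t • w)) 0 0 := by
      have hd0 := hline y w
      rw [hstat'] at hd0
      exact hd0
    have hlt := hstrict.lt_slope_of_hasDerivAt (Set.mem_univ (0:ℝ)) (Set.mem_univ (1:ℝ))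
      one_pos hd
    rw [slope_def_field] at hlt
    simp only [one_smul, zero_smul, add_zero, sub_zero, div_one] at hlt
    have hy1w : y + w = yB := by rw [hw]; abel
    rw [hy1w] at hlt
    -- but f yB ≤ f y since y ∈ A
    have hmem : y ∈ A := ⟨c', hc'⟩
    have := hmin hmem
    simp only [hfdef, Set.mem_setOf_eq] at this hlt
    linarith
  · rintro rfl
    exact ⟨part1, cB, hcB⟩
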